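/- Theorem 2 (error propagation bound for dynamic error-aware KL regularization): Consider the dynamic-KL scheme: (λ_k)_{k≥0} positive reals, η_k = 1/λ_k, Z_k = Σ_{j=0}^k η_j; π_0 the uniform policy; for each k ≥ 0, π_{k+1}(a|s) = π_k(a|s) exp(η_k q_k(s,a)) / Σ_b π_k(b|s) exp(η_k q_k(s,b)) (the maximizer of π ↦ ⟨π, q_k⟩ − λ_k KL(π||π_k)) and q_{k+1} = T^{λ_k,0}_{π_{k+1}|π_k} q_k + ε_{k+1} for given ε_{k+1} ∈ ℝ^{S×A}. Let q_max ≥ 0 satisfy ‖q_j‖_∞ ≤ q_max and ‖T^{λ_j,0}_{π_{j+1}|π_j} q_j‖_∞ ≤ q_max for all j, and let π_* be an optimal policy (q_{π_*} ≥ q_π componentwise for every policy π), with q_* = q_{π_*}. Then for every k ≥ 1: ‖q_* − q_{π_{k+1}}‖_∞ ≤ (2/(1−γ)) · (1/Z_k) · ( ‖Σ_{j=1}^k η_j ε_j‖_∞ + (η_{k+1} + η_0 + Σ_{j=0}^k |η_{j+1} − η_j|) · q_max + γ ln|A| ). -/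

import Mathlib

open Finset

noncomputable section

/-- A transition kernel on a finite MDP: `P s a s'` is the probability of moving to `s'`
from `s` after action `a`. -/
def IsKernel {S A : Type*} [Fintype S] (P : S → A → S → ℝ) : Prop :=
  (∀ s a s', 0 ≤ P s a s') ∧ ∀ s a, ∑ s', P s a s' = 1

/-- A policy: `π s a` is the probability of action `a` in state `s`. -/
def IsPolicy {S A : Type*} [Fintype A] (π : S → A → ℝ) : Prop :=
  (∀ s a, 0 ≤ π s a) ∧ ∀ s, ∑ a, π s a = 1

/-- `(P v)(s,a) = ∑_{s'} P(s'|s,a) v(s')`. -/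
def kerApp {S A : Type*} [Fintype S] (P : S → A → S → ℝ) (v : S → ℝ) : S → A → ℝ :=
  fun s a => ∑ s', P s a s' * v s'

/-- `⟨f₁,f₂⟩(s) = ∑_a f₁(s,a) f₂(s,a)`. -/
def dotSA {S A : Type*} [Fintype A] (f₁ f₂ : S → A → ℝ) : S → ℝ :=
  fun s => ∑ a, f₁ s a * f₂ s a

/-- The policy-induced transition operator `P_π q = P ⟨π, q⟩` on `ℝ^{S×A}`. -/
def Ppi {S A : Type*} [Fintype S] [Fintype A] (P : S → A → S → ℝ) (π : S → A → ℝ)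
    (q : S → A → ℝ) : S → A → ℝ :=
  kerApp P (dotSA π q)

/-- The Bellman evaluation operator `T_π q = r + γ P_π q`. -/
def bellman {S A : Type*} [Fintype S] [Fintype A] (P : S → A → S → ℝ) (r : S → A → ℝ)
    (γ : ℝ) (π : S → A → ℝ) (q : S → A → ℝ) : S → A → ℝ :=
  fun s a => r s a + γ * Ppi P π q s a

/-- The Shannon entropy of a policy, `H(π)(s) = -∑_a π(a|s) ln π(a|s)` (with `0 ln 0 = 0`). -/
def entPol {S A : Type*} [Fintype A] (π : S → A → ℝ) : S → ℝ :=
  fun s => -∑ a, π s a * Real.log (π s a)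

/-- The KL divergence between policies,
`KL(π₁‖π₂)(s) = ∑_a π₁(a|s)(ln π₁(a|s) - ln π₂(a|s))`. -/
def klPol {S A : Type*} [Fintype A] (π₁ π₂ : S → A → ℝ) : S → ℝ :=
  fun s => ∑ a, π₁ s a * (Real.log (π₁ s a) - Real.log (π₂ s a))

/-- The KL-regularized Bellman operator `T^{λ,0}_{π|μ} q = r + γ P(⟨π,q⟩ - λ KL(π‖μ))`. -/
def TKL {S A : Type*} [Fintype S] [Fintype A] (P : S → A → S → ℝ) (r : S → A → ℝ)
    (γ lam : ℝ) (π μ : S → A → ℝ) (q : S → A → ℝ) : S → A → ℝ :=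
  fun s a => r s a + γ * kerApp P (fun s' => dotSA π q s' - lam * klPol π μ s') s a

/-- The entropy-regularized Bellman operator `T^{0,τ}_π q = r + γ P(⟨π,q⟩ + τ H(π))`. -/
def TH {S A : Type*} [Fintype S] [Fintype A] (P : S → A → S → ℝ) (r : S → A → ℝ)
    (γ tau : ℝ) (π : S → A → ℝ) (q : S → A → ℝ) : S → A → ℝ :=
  fun s a => r s a + γ * kerApp P (fun s' => dotSA π q s' + tau * entPol π s') s a



private lemma aux_dot_le {A : Type*} [Fintype A] (p x : A → ℝ) (B : ℝ)
    (hp : ∀ a, 0 ≤ p a) (hs : ∑ a, p a = 1) (hx : ∀ a, x a ≤ B) :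
    ∑ a, p a * x a ≤ B := by
  calc ∑ a, p a * x a ≤ ∑ a, p a * B :=
        Finset.sum_le_sum fun a _ => mul_le_mul_of_nonneg_left (hx a) (hp a)
    _ = B := by rw [← Finset.sum_mul, hs, one_mul]

private lemma aux_dot_ge {A : Type*} [Fintype A] (p x : A → ℝ) (B : ℝ)
    (hp : ∀ a, 0 ≤ p a) (hs : ∑ a, p a = 1) (hx : ∀ a, B ≤ x a) :
    B ≤ ∑ a, p a * x a := by
  have := aux_dot_le p (fun a => -x a) (-B) hp hs (fun a => neg_le_neg (hx a))
  simp only [mul_neg] at this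
  rw [Finset.sum_neg_distrib] at this
  linarith

private lemma aux_dot_abs_le {A : Type*} [Fintype A] (p x : A → ℝ) (B : ℝ)
    (hp : ∀ a, 0 ≤ p a) (hs : ∑ a, p a = 1) (hx : ∀ a, |x a| ≤ B) :
    |∑ a, p a * x a| ≤ B := by
  rw [abs_le]
  constructor
  · exact aux_dot_ge p x (-B) hp hs fun a => (abs_le.mp (hx a)).1
  · exact aux_dot_le p x B hp hs fun a => (abs_le.mp (hx a)).2

/-- Gibbs: `∑ p log p ≥ - log card` for a positive probability vector. -/
private lemma aux_entropy {A : Type*} [Fintype A] [Nonempty A] (p : A → ℝ)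
    (hp : ∀ a, 0 < p a) (hs : ∑ a, p a = 1) :
    -Real.log (Fintype.card A : ℝ) ≤ ∑ a, p a * Real.log (p a) := by
  set N : ℝ := (Fintype.card A : ℝ) with hN
  have hNpos : (0:ℝ) < N := by
    rw [hN]
    exact_mod_cast Fintype.card_pos
  have key : ∀ a, p a - N⁻¹ ≤ p a * Real.log (p a * N) := by
    intro a
    have hpaN : 0 < p a * N := mul_pos (hp a) hNpos
    have h1 : Real.log (p a * N)⁻¹ ≤ (p a * N)⁻¹ - 1 :=
      Real.log_le_sub_one_of_pos (by positivity)
    rw [Real.log_inv] at h1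
    have h2 : 1 - (p a * N)⁻¹ ≤ Real.log (p a * N) := by linarith
    have h3 : p a * (1 - (p a * N)⁻¹) ≤ p a * Real.log (p a * N) :=
      mul_le_mul_of_nonneg_left h2 (hp a).le
    have h4 : p a * (1 - (p a * N)⁻¹) = p a - N⁻¹ := by
      rw [mul_sub, mul_one, mul_inv, ← mul_assoc, mul_inv_cancel₀ (ne_of_gt (hp a)), one_mul]
    linarith [h3, h4 ▸ h3]
  have hsum : (0:ℝ) ≤ ∑ a, p a * Real.log (p a * N) := by
    have := Finset.sum_le_sum (fun a (_ : a ∈ Finset.univ) => key a)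
    have hl : ∑ a, (p a - N⁻¹) = 0 := by
      rw [Finset.sum_sub_distrib, hs, Finset.sum_const, Finset.card_univ,
        nsmul_eq_mul]
      field_simp
      simp [hN]
    linarith [hl ▸ this]
  have hexp : ∀ a, p a * Real.log (p a * N) = p a * Real.log (p a) + p a * Real.log N := by
    intro a
    rw [Real.log_mul (ne_of_gt (hp a)) (ne_of_gt hNpos)]
    ring
  rw [Finset.sum_congr rfl (fun a _ => hexp a), Finset.sum_add_distrib,
    ← Finset.sum_mul, hs, one_mul] at hsum
  linarith

/-- Abstract two-chain contraction argument. -/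
private lemma aux_core {S A : Type*} [Fintype S] [Fintype A] [Nonempty S] [Nonempty A]
    (P : S → A → S → ℝ) (hP0 : ∀ s a s', 0 ≤ P s a s') (hP1 : ∀ s a, ∑ s', P s a s' = 1)
    (γ : ℝ) (hγ0 : 0 ≤ γ) (hγ1 : γ < 1)
    (πa πb : S → A → ℝ)
    (hπa0 : ∀ s b, 0 ≤ πa s b) (hπa1 : ∀ s, ∑ b, πa s b = 1)
    (hπb0 : ∀ s b, 0 ≤ πb s b) (hπb1 : ∀ s, ∑ b, πb s b = 1)
    (r qs qp F E : S → A → ℝ) (Φ Mf : S → ℝ) (Z c2 ρq eN lnN : ℝ)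
    (hqs : ∀ s a, qs s a = r s a + γ * ∑ s', P s a s' * (∑ b, πa s' b * qs s' b))
    (hqp : ∀ s a, qp s a = r s a + γ * ∑ s', P s a s' * (∑ b, πb s' b * qp s' b))
    (hAGG : ∀ s a, F s a = Z * r s a + γ * (∑ s', P s a s' * Φ s') + E s a)
    (hΦub : ∀ s', Φ s' ≤ Mf s' + ρq) (hΦlb : ∀ s', Mf s' - ρq ≤ Φ s')
    (hF1 : ∀ s', ∑ b, πa s' b * F s' b ≤ Mf s' + lnN + c2)
    (hF2 : ∀ s', Mf s' - c2 ≤ ∑ b, πb s' b * F s' b)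
    (hE : ∀ s a, |E s a| ≤ eN) :
    ∀ s a, (1 - γ) * (Z * qs s a - Z * qp s a) ≤ 2 * eN + γ * (2 * c2 + 2 * ρq + lnN) := by
  set D1 : S → A → ℝ := fun s a => Z * qs s a - F s a with hD1
  set D2 : S → A → ℝ := fun s a => F s a - Z * qp s a with hD2
  obtain ⟨p1, hp1⟩ := Finite.exists_max (fun p : S × A => D1 p.1 p.2)
  obtain ⟨p2, hp2⟩ := Finite.exists_max (fun p : S × A => D2 p.1 p.2)
  set m1 := D1 p1.1 p1.2 with hm1
  set m2 := D2 p2.1 p2.2 with hm2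
  have hPdot : ∀ s a (x : S → ℝ) (B : ℝ), (∀ s', x s' ≤ B) →
      ∑ s', P s a s' * x s' ≤ B := fun s a x B hx =>
    aux_dot_le (P s a) x B (hP0 s a) (hP1 s a) hx
  -- chain 1
  have key1 : ∀ s a, D1 s a =
      γ * ∑ s', P s a s' * (Z * (∑ b, πa s' b * qs s' b) - Φ s') - E s a := by
    intro s a
    have : ∑ s', P s a s' * (Z * (∑ b, πa s' b * qs s' b) - Φ s')
        = Z * (∑ s', P s a s' * (∑ b, πa s' b * qs s' b)) - ∑ s', P s a s' * Φ s' := by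
      rw [Finset.mul_sum, ← Finset.sum_sub_distrib]
      exact Finset.sum_congr rfl fun s' _ => by ring
    rw [hD1]
    simp only
    rw [hqs s a, hAGG s a, this]
    ring
  have inner1 : ∀ s', Z * (∑ b, πa s' b * qs s' b) - Φ s' ≤ m1 + (c2 + ρq + lnN) := by
    intro s'
    have hsplit : Z * (∑ b, πa s' b * qs s' b)
        = (∑ b, πa s' b * D1 s' b) + ∑ b, πa s' b * F s' b := by
      rw [Finset.mul_sum, ← Finset.sum_add_distrib]
      exact Finset.sum_congr rfl fun b _ => by simp only [hD1]; ring
    have h1 : ∑ b, πa s' b * D1 s' b ≤ m1 :=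
      aux_dot_le _ _ _ (hπa0 s') (hπa1 s') (fun b => hp1 (s', b))
    have h2 := hF1 s'
    have h3 := hΦlb s'
    rw [hsplit]; linarith
  have bnd1 : (1 - γ) * m1 ≤ γ * (c2 + ρq + lnN) + eN := by
    have h := key1 p1.1 p1.2
    have h2 : ∑ s', P p1.1 p1.2 s' * (Z * (∑ b, πa s' b * qs s' b) - Φ s')
        ≤ m1 + (c2 + ρq + lnN) := hPdot _ _ _ _ inner1
    have h3 : -E p1.1 p1.2 ≤ eN := by
      have := hE p1.1 p1.2; rw [abs_le] at this; linarith
    have h5 := mul_le_mul_of_nonneg_left h2 hγ0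
    have h6 : m1 = γ * ∑ s', P p1.1 p1.2 s' * (Z * (∑ b, πa s' b * qs s' b) - Φ s')
        - E p1.1 p1.2 := h
    have h7 : γ * (m1 + (c2 + ρq + lnN)) = γ * m1 + γ * (c2 + ρq + lnN) := by ring
    have h8 : (1 - γ) * m1 = m1 - γ * m1 := by ring
    linarith
  -- chain 2
  have key2 : ∀ s a, D2 s a =
      γ * ∑ s', P s a s' * (Φ s' - Z * (∑ b, πb s' b * qp s' b)) + E s a := by
    intro s a
    have : ∑ s', P s a s' * (Φ s' - Z * (∑ b, πb s' b * qp s' b))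
        = ∑ s', P s a s' * Φ s' - Z * (∑ s', P s a s' * (∑ b, πb s' b * qp s' b)) := by
      rw [Finset.mul_sum, ← Finset.sum_sub_distrib]
      exact Finset.sum_congr rfl fun s' _ => by ring
    rw [hD2]
    simp only
    rw [hqp s a, hAGG s a, this]
    ring
  have inner2 : ∀ s', Φ s' - Z * (∑ b, πb s' b * qp s' b) ≤ m2 + (c2 + ρq) := by
    intro s'
    have hsplit : Z * (∑ b, πb s' b * qp s' b)
        = (∑ b, πb s' b * F s' b) - ∑ b, πb s' b * D2 s' b := by
      rw [Finset.mul_sum, ← Finset.sum_sub_distrib]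
      exact Finset.sum_congr rfl fun b _ => by simp only [hD2]; ring
    have h1 : ∑ b, πb s' b * D2 s' b ≤ m2 :=
      aux_dot_le _ _ _ (hπb0 s') (hπb1 s') (fun b => hp2 (s', b))
    have h2 := hF2 s'
    have h3 := hΦub s'
    rw [hsplit]; linarith
  have bnd2 : (1 - γ) * m2 ≤ γ * (c2 + ρq) + eN := by
    have h := key2 p2.1 p2.2
    have h2 : ∑ s', P p2.1 p2.2 s' * (Φ s' - Z * (∑ b, πb s' b * qp s' b))
        ≤ m2 + (c2 + ρq) := hPdot _ _ _ _ inner2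
    have h3 : E p2.1 p2.2 ≤ eN := by
      have := hE p2.1 p2.2; rw [abs_le] at this; linarith
    have h5 := mul_le_mul_of_nonneg_left h2 hγ0
    have h6 : m2 = γ * ∑ s', P p2.1 p2.2 s' * (Φ s' - Z * (∑ b, πb s' b * qp s' b))
        + E p2.1 p2.2 := h
    have h7 : γ * (m2 + (c2 + ρq)) = γ * m2 + γ * (c2 + ρq) := by ring
    have h8 : (1 - γ) * m2 = m2 - γ * m2 := by ring
    linarith
  -- combine
  intro s a
  have hsum : Z * qs s a - Z * qp s a = D1 s a + D2 s a := by
    simp only [hD1, hD2]; ring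
  have h1 : D1 s a ≤ m1 := hp1 (s, a)
  have h2 : D2 s a ≤ m2 := hp2 (s, a)
  have hγ1' : 0 < 1 - γ := by linarith
  calc (1 - γ) * (Z * qs s a - Z * qp s a) ≤ (1 - γ) * (m1 + m2) := by
        rw [hsum]; exact mul_le_mul_of_nonneg_left (by linarith) hγ1'.le
    _ = (1 - γ) * m1 + (1 - γ) * m2 := by ring
    _ ≤ 2 * eN + γ * (2 * c2 + 2 * ρq + lnN) := by linarith

private def SbF {S A : Type*} (η : ℕ → ℝ) (q : ℕ → S → A → ℝ) (j : ℕ) (s : S) (a : A) : ℝ :=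
  ∑ i ∈ Finset.range (j + 1), η i * q i s a

private def MF {S A : Type*} [Fintype A] (η : ℕ → ℝ) (q : ℕ → S → A → ℝ) (j : ℕ) (s : S) : ℝ :=
  Real.log (∑ b, Real.exp (SbF η q j s b))

private def LF {S A : Type*} [Fintype A] (η : ℕ → ℝ) (q : ℕ → S → A → ℝ)
    (π : ℕ → S → A → ℝ) (j : ℕ) (s : S) : ℝ :=
  Real.log (∑ b, π j s b * Real.exp (η j * q j s b))

section Soft
variable {S A : Type*} [Fintype A] [Nonempty A]
  (η : ℕ → ℝ) (q : ℕ → S → A → ℝ) (π : ℕ → S → A → ℝ)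

private lemma aux_expsum_pos (j : ℕ) (s : S) : 0 < ∑ b, Real.exp (SbF η q j s b) :=
  Finset.sum_pos (fun b _ => Real.exp_pos _) Finset.univ_nonempty

variable (hπ0 : ∀ s a, π 0 s a = 1 / (Fintype.card A : ℝ))
  (hπ : ∀ k s a, π (k + 1) s a =
      π k s a * Real.exp (η k * q k s a) / ∑ b, π k s b * Real.exp (η k * q k s b))

include hπ0 hπ in
private lemma aux_softmax : ∀ j s a,
    π (j + 1) s a = Real.exp (SbF η q j s a) / ∑ b, Real.exp (SbF η q j s b) := by
  have hN : (0:ℝ) < (Fintype.card A : ℝ) := by exact_mod_cast Fintype.card_pos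
  intro j
  induction j with
  | zero =>
    intro s a
    have hS0 : ∀ b, SbF η q 0 s b = η 0 * q 0 s b := by
      intro b; simp [SbF]
    rw [hπ 0 s a]
    simp only [hπ0, hS0]
    rw [← Finset.mul_sum]
    rw [mul_div_mul_left _ _ (by positivity : (1:ℝ) / (Fintype.card A : ℝ) ≠ 0)]
  | succ j ih =>
    intro s a
    have hden : 0 < ∑ b, Real.exp (SbF η q j s b) := aux_expsum_pos η q j s
    have hstep : ∀ b, SbF η q (j+1) s b = SbF η q j s b + η (j+1) * q (j+1) s b := by
      intro b; simp [SbF, Finset.sum_range_succ]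
    rw [hπ (j+1) s a]
    simp only [ih]
    have hterm : ∀ b, Real.exp (SbF η q j s b) / (∑ c, Real.exp (SbF η q j s c)) *
        Real.exp (η (j+1) * q (j+1) s b)
        = Real.exp (SbF η q (j+1) s b) / (∑ c, Real.exp (SbF η q j s c)) := by
      intro b
      rw [hstep b, Real.exp_add]
      ring
    simp only [hterm]
    rw [← Finset.sum_div]
    have hden2 : 0 < ∑ b, Real.exp (SbF η q (j+1) s b) := aux_expsum_pos η q (j+1) s
    field_simp

include hπ0 hπ in
private lemma aux_policy : ∀ j, (∀ s a, 0 < π j s a) ∧ ∀ s, ∑ a, π j s a = 1 := by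
  have hN : (0:ℝ) < (Fintype.card A : ℝ) := by exact_mod_cast Fintype.card_pos
  intro j
  cases j with
  | zero =>
    constructor
    · intro s a; rw [hπ0]; positivity
    · intro s
      simp only [hπ0]
      rw [Finset.sum_const, Finset.card_univ, nsmul_eq_mul]
      field_simp
  | succ j =>
    have hsm := aux_softmax η q π hπ0 hπ j
    constructor
    · intro s a
      rw [hsm s a]
      exact div_pos (Real.exp_pos _) (aux_expsum_pos η q j s)
    · intro s
      simp only [hsm s]
      rw [← Finset.sum_div, div_self (ne_of_gt (aux_expsum_pos η q j s))]

include hπ0 hπ in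
private lemma aux_LM0 : ∀ s : S, LF η q π 0 s = MF η q 0 s - Real.log (Fintype.card A : ℝ) := by
  have hN : (0:ℝ) < (Fintype.card A : ℝ) := by exact_mod_cast Fintype.card_pos
  intro s
  have hS0 : ∀ b, η 0 * q 0 s b = SbF η q 0 s b := by intro b; simp [SbF]
  unfold LF MF
  simp only [hπ0, hS0]
  rw [← Finset.mul_sum, Real.log_mul (by positivity) (ne_of_gt (aux_expsum_pos η q 0 s)),
    one_div, Real.log_inv]
  ring

include hπ0 hπ in
private lemma aux_LMs : ∀ (j : ℕ) (s : S), LF η q π (j+1) s = MF η q (j+1) s - MF η q j s := by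
  intro j s
  have hsm := aux_softmax η q π hπ0 hπ j
  have hden : 0 < ∑ b, Real.exp (SbF η q j s b) := aux_expsum_pos η q j s
  have hstep : ∀ b, SbF η q (j+1) s b = SbF η q j s b + η (j+1) * q (j+1) s b := by
    intro b; simp [SbF, Finset.sum_range_succ]
  unfold LF MF
  have hterm : ∀ b, π (j+1) s b * Real.exp (η (j+1) * q (j+1) s b)
      = Real.exp (SbF η q (j+1) s b) / (∑ c, Real.exp (SbF η q j s c)) := by
    intro b
    rw [hsm s b, hstep b, Real.exp_add]
    ring
  simp only [hterm]
  rw [← Finset.sum_div,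
    Real.log_div (ne_of_gt (aux_expsum_pos η q (j+1) s)) (ne_of_gt hden)]

include hπ0 hπ in
private lemma aux_Mtel : ∀ (n : ℕ) (s : S),
    ∑ j ∈ Finset.range (n + 1), LF η q π j s
      = MF η q n s - Real.log (Fintype.card A : ℝ) := by
  intro n
  induction n with
  | zero => intro s; rw [Finset.sum_range_one]; exact aux_LM0 η q π hπ0 hπ s
  | succ n ih =>
    intro s
    rw [Finset.sum_range_succ, ih s, aux_LMs η q π hπ0 hπ n s]
    ring

end Soft

section TklSec
variable {S A : Type*} [Fintype S] [Fintype A] [Nonempty A]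
  (η : ℕ → ℝ) (q : ℕ → S → A → ℝ) (π : ℕ → S → A → ℝ)

private lemma aux_LCpos (j : ℕ) (s : S) (hpos : ∀ b, 0 < π j s b) :
    0 < ∑ b, π j s b * Real.exp (η j * q j s b) :=
  Finset.sum_pos (fun b _ => mul_pos (hpos b) (Real.exp_pos _)) Finset.univ_nonempty

private lemma aux_TKLform
    (P : S → A → S → ℝ) (r : S → A → ℝ) (γ : ℝ) (lam : ℝ) (j : ℕ)
    (hlamη : lam * η j = 1) (hlaminv : lam = (η j)⁻¹)
    (hpos : ∀ s b, 0 < π j s b)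
    (hπrec : ∀ s a, π (j + 1) s a =
      π j s a * Real.exp (η j * q j s a) / ∑ b, π j s b * Real.exp (η j * q j s b))
    (hsum1 : ∀ s, ∑ b, π (j+1) s b = 1) :
    ∀ s a, TKL P r γ lam (π (j+1)) (π j) (q j) s a
      = r s a + γ * ∑ s', P s a s' * ((η j)⁻¹ * LF η q π j s') := by
  intro s a
  have hkey : ∀ s' : S, dotSA (π (j+1)) (q j) s' - lam * klPol (π (j+1)) (π j) s'
      = (η j)⁻¹ * LF η q π j s' := by
    intro s'
    have hC : 0 < ∑ b, π j s' b * Real.exp (η j * q j s' b) := aux_LCpos η q π j s' (hpos s')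
    have hlog : ∀ b, Real.log (π (j+1) s' b)
        = Real.log (π j s' b) + η j * q j s' b - LF η q π j s' := by
      intro b
      rw [hπrec s' b, Real.log_div (ne_of_gt (mul_pos (hpos s' b) (Real.exp_pos _))) (ne_of_gt hC),
        Real.log_mul (ne_of_gt (hpos s' b)) (ne_of_gt (Real.exp_pos _)), Real.log_exp]
      rfl
    have hkl : klPol (π (j+1)) (π j) s'
        = η j * dotSA (π (j+1)) (q j) s' - LF η q π j s' := by
      unfold klPol dotSA
      have : ∀ b, π (j+1) s' b * (Real.log (π (j+1) s' b) - Real.log (π j s' b))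
          = η j * (π (j+1) s' b * q j s' b) - LF η q π j s' * π (j+1) s' b := by
        intro b; rw [hlog b]; ring
      rw [Finset.sum_congr rfl fun b _ => this b, Finset.sum_sub_distrib,
        ← Finset.mul_sum, ← Finset.mul_sum, hsum1 s', mul_one]
    rw [hkl]
    have hη1 : η j ≠ 0 := by
      intro h0; rw [h0, mul_zero] at hlamη; exact one_ne_zero hlamη.symm
    rw [hlaminv]
    field_simp
    ring
  unfold TKL kerApp
  simp only
  rw [Finset.sum_congr rfl fun s' (_ : s' ∈ Finset.univ) => by rw [hkey s']]

private lemma aux_Lbound (j : ℕ) (s : S) (qmax : ℝ)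
    (hηpos : 0 < η j)
    (hpos : ∀ b, 0 < π j s b) (hsum1 : ∑ b, π j s b = 1)
    (hqb : ∀ b, |q j s b| ≤ qmax) :
    |LF η q π j s| ≤ η j * qmax := by
  have hC : 0 < ∑ b, π j s b * Real.exp (η j * q j s b) := aux_LCpos η q π j s hpos
  have hub : ∑ b, π j s b * Real.exp (η j * q j s b) ≤ Real.exp (η j * qmax) := by
    apply aux_dot_le _ _ _ (fun b => (hpos b).le) hsum1
    intro b
    exact Real.exp_le_exp.mpr (mul_le_mul_of_nonneg_left ((abs_le.mp (hqb b)).2) hηpos.le)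
  have hlb : Real.exp (-(η j * qmax)) ≤ ∑ b, π j s b * Real.exp (η j * q j s b) := by
    apply aux_dot_ge _ _ _ (fun b => (hpos b).le) hsum1
    intro b
    apply Real.exp_le_exp.mpr
    have := (abs_le.mp (hqb b)).1
    nlinarith
  rw [abs_le]
  constructor
  · have := Real.log_le_log (Real.exp_pos _) hlb
    rw [Real.log_exp] at this
    exact le_trans (by linarith) this
  · have := Real.log_le_log hC hub
    rw [Real.log_exp] at this
    exact this

private lemma aux_M1 (j : ℕ) (s : S) (b : A) : SbF η q j s b ≤ MF η q j s := by
  have h1 : Real.exp (SbF η q j s b) ≤ ∑ c, Real.exp (SbF η q j s c) :=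
    Finset.single_le_sum (fun c _ => (Real.exp_pos _).le) (Finset.mem_univ b)
  have := Real.log_le_log (Real.exp_pos _) h1
  rwa [Real.log_exp] at this

private lemma aux_M2 (j : ℕ) (s : S)
    (hsm : ∀ b, π (j+1) s b = Real.exp (SbF η q j s b) / ∑ c, Real.exp (SbF η q j s c))
    (hpos : ∀ b, 0 < π (j+1) s b) (hsum1 : ∑ b, π (j+1) s b = 1) :
    MF η q j s - Real.log (Fintype.card A : ℝ) ≤ ∑ b, π (j+1) s b * SbF η q j s b := by
  have hden : 0 < ∑ c, Real.exp (SbF η q j s c) :=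
    Finset.sum_pos (fun c _ => Real.exp_pos _) Finset.univ_nonempty
  have hSb : ∀ b, SbF η q j s b = Real.log (π (j+1) s b) + MF η q j s := by
    intro b
    rw [hsm b, Real.log_div (ne_of_gt (Real.exp_pos _)) (ne_of_gt hden), Real.log_exp]
    unfold MF; ring
  have hsplit : ∑ b, π (j+1) s b * SbF η q j s b
      = (∑ b, π (j+1) s b * Real.log (π (j+1) s b)) + MF η q j s := by
    have h1 : ∀ b, π (j+1) s b * SbF η q j s b
        = π (j+1) s b * Real.log (π (j+1) s b) + π (j+1) s b * MF η q j s := by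
      intro b; rw [hSb b]; ring
    rw [Finset.sum_congr rfl fun b _ => h1 b, Finset.sum_add_distrib,
      ← Finset.sum_mul, hsum1, one_mul]
  rw [hsplit]
  have := aux_entropy (fun b => π (j+1) s b) hpos hsum1
  linarith

end TklSec
set_option maxHeartbeats 1000000 in
/-- Theorem 2: error propagation bound for dynamic error-aware KL
regularization. `‖·‖` on `S → A → ℝ` is the sup (ℓ∞) norm. -/
theorem dynamic_kl_error_propagation_bound
    {S A : Type*} [Fintype S] [Fintype A] [Nonempty S] [Nonempty A]
    (P : S → A → S → ℝ) (hP : IsKernel P)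
    (r : S → A → ℝ) (γ : ℝ) (hγ0 : 0 < γ) (hγ1 : γ < 1)
    (lam : ℕ → ℝ) (hlam : ∀ k, 0 < lam k)
    (η : ℕ → ℝ) (hη : ∀ k, η k = 1 / lam k)
    (Z : ℕ → ℝ) (hZ : ∀ k, Z k = ∑ j ∈ Finset.range (k + 1), η j)
    (q ε : ℕ → S → A → ℝ)
    (π : ℕ → S → A → ℝ)
    (hπ0 : ∀ s a, π 0 s a = 1 / (Fintype.card A : ℝ))
    (hπ : ∀ k s a, π (k + 1) s a =
      π k s a * Real.exp (η k * q k s a) / ∑ b, π k s b * Real.exp (η k * q k s b))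
    (hq : ∀ k s a, q (k + 1) s a =
      TKL P r γ (lam k) (π (k + 1)) (π k) (q k) s a + ε (k + 1) s a)
    (qmax : ℝ) (hqmax : 0 ≤ qmax)
    (hqb : ∀ j, ‖q j‖ ≤ qmax)
    (hTb : ∀ j, ‖TKL P r γ (lam j) (π (j + 1)) (π j) (q j)‖ ≤ qmax)
    (πstar : S → A → ℝ) (hπstar : IsPolicy πstar)
    (qstar : S → A → ℝ) (hqstar : qstar = bellman P r γ πstar qstar)
    (hopt : ∀ π' : S → A → ℝ, IsPolicy π' →
      ∀ qπ : S → A → ℝ, qπ = bellman P r γ π' qπ → ∀ s a, qπ s a ≤ qstar s a)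
    (qpol : ℕ → S → A → ℝ)
    (hqpol : ∀ k, qpol k = bellman P r γ (π k) (qpol k)) :
    ∀ k, 1 ≤ k →
      ‖qstar - qpol (k + 1)‖ ≤
        2 / (1 - γ) * (1 / Z k) *
          (‖∑ j ∈ Finset.Icc 1 k, η j • ε j‖
            + (η (k + 1) + η 0 + ∑ j ∈ Finset.range (k + 1), |η (j + 1) - η j|) * qmax
            + γ * Real.log (Fintype.card A)) := by
  intro k _hk
  -- ---------------- basic facts ----------------
  have hγ1' : (0:ℝ) < 1 - γ := by linarith
  have hηpos : ∀ j, 0 < η j := fun j => by rw [hη j]; exact one_div_pos.mpr (hlam j)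
  have hlamη : ∀ j, lam j * η j = 1 := fun j => by
    rw [hη j]; exact mul_one_div_cancel (ne_of_gt (hlam j))
  have hlaminv : ∀ j, lam j = (η j)⁻¹ := fun j => by
    rw [hη j, one_div, inv_inv]
  obtain ⟨hP0, hP1⟩ := hP
  have hpol := aux_policy η q π hπ0 hπ
  have hsm := aux_softmax η q π hπ0 hπ
  have hN1 : (1:ℝ) ≤ (Fintype.card A : ℝ) := by exact_mod_cast Fintype.card_pos
  have hlnN : 0 ≤ Real.log (Fintype.card A : ℝ) := Real.log_nonneg hN1
  have hqb' : ∀ j s a, |q j s a| ≤ qmax := by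
    intro j s a
    calc |q j s a| = ‖q j s a‖ := (Real.norm_eq_abs _).symm
      _ ≤ ‖q j s‖ := norm_le_pi_norm (q j s) a
      _ ≤ ‖q j‖ := norm_le_pi_norm (q j) s
      _ ≤ qmax := hqb j
  have hTb' : ∀ j s a, |TKL P r γ (lam j) (π (j + 1)) (π j) (q j) s a| ≤ qmax := by
    intro j s a
    calc |TKL P r γ (lam j) (π (j + 1)) (π j) (q j) s a|
        = ‖TKL P r γ (lam j) (π (j + 1)) (π j) (q j) s a‖ := (Real.norm_eq_abs _).symm
      _ ≤ ‖TKL P r γ (lam j) (π (j + 1)) (π j) (q j) s‖ := norm_le_pi_norm _ a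
      _ ≤ ‖TKL P r γ (lam j) (π (j + 1)) (π j) (q j)‖ := norm_le_pi_norm _ s
      _ ≤ qmax := hTb j
  have hLb : ∀ j s, |LF η q π j s| ≤ η j * qmax := fun j s =>
    aux_Lbound η q π j s qmax (hηpos j) (fun b => (hpol j).1 s b) ((hpol j).2 s)
      (fun b => hqb' j s b)
  have hTf : ∀ j s a, TKL P r γ (lam j) (π (j + 1)) (π j) (q j) s a
      = r s a + γ * ∑ s', P s a s' * ((η j)⁻¹ * LF η q π j s') := fun j =>
    aux_TKLform η q π P r γ (lam j) j (hlamη j) (hlaminv j) (hpol j).1 (hπ j)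
      ((hpol (j + 1)).2)
  -- ---------------- phantom weights ----------------
  set Dm : ℝ := ∑ j ∈ Finset.range k, max (η j - η (j + 1)) 0 with hDm
  have hDm0 : 0 ≤ Dm := Finset.sum_nonneg fun j _ => le_max_right _ _
  have hDmηk : 0 < Dm + η k := by linarith [hηpos k]
  set c : ℝ := η 0 / (Dm + η k) with hc
  have hc0 : 0 < c := div_pos (hηpos 0) hDmηk
  have hcDm : c * (Dm + η k) = η 0 := by
    rw [hc]; field_simp
  have hc1 : c ≤ 1 := by
    rw [hc, div_le_one hDmηk]
    have htel : ∑ j ∈ Finset.range k, (η j - η (j + 1)) = η 0 - η k :=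
      Finset.sum_range_sub' η k
    have h2 : η 0 - η k ≤ Dm := by
      rw [← htel, hDm]
      exact Finset.sum_le_sum fun j _ => le_max_left _ _
    linarith
  set w : ℕ → ℝ := fun j => if j = k then c * η k else c * max (η j - η (j + 1)) 0 with hw
  have hw0 : ∀ j, 0 ≤ w j := by
    intro j
    rw [hw]
    dsimp only
    split
    · exact mul_nonneg hc0.le (hηpos k).le
    · exact mul_nonneg hc0.le (le_max_right _ _)
  have hwrangek : ∀ j ∈ Finset.range k, w j = c * max (η j - η (j + 1)) 0 := by
    intro j hj
    rw [hw]
    dsimp only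
    rw [if_neg (Nat.ne_of_lt (Finset.mem_range.mp hj))]
  have hwk : w k = c * η k := by rw [hw]; dsimp only; rw [if_pos rfl]
  have hwsum : ∑ j ∈ Finset.range (k + 1), w j = η 0 := by
    rw [Finset.sum_range_succ, Finset.sum_congr rfl hwrangek, ← Finset.mul_sum, ← hDm, hwk]
    calc c * Dm + c * η k = c * (Dm + η k) := by ring
      _ = η 0 := hcDm
  -- ---------------- error sum ----------------
  have hEeq : ∀ s a, (∑ j ∈ Finset.Icc 1 k, η j • ε j) s a
      = ∑ j ∈ Finset.range k, η (j + 1) * ε (j + 1) s a := by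
    intro s a
    rw [Finset.sum_apply, Finset.sum_apply]
    rw [← Finset.Ico_add_one_right_eq_Icc, Finset.sum_Ico_eq_sum_range]
    simp only [Nat.add_sub_cancel, Pi.smul_apply, smul_eq_mul]
    exact Finset.sum_congr rfl fun j _ => by rw [Nat.add_comm 1 j]
  set eN : ℝ := ‖∑ j ∈ Finset.Icc 1 k, η j • ε j‖ with heN
  have heN0 : 0 ≤ eN := norm_nonneg _
  have hEb : ∀ s a, |∑ j ∈ Finset.range k, η (j + 1) * ε (j + 1) s a| ≤ eN := by
    intro s a
    rw [← hEeq s a]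
    calc |(∑ j ∈ Finset.Icc 1 k, η j • ε j) s a|
        = ‖(∑ j ∈ Finset.Icc 1 k, η j • ε j) s a‖ := (Real.norm_eq_abs _).symm
      _ ≤ ‖(∑ j ∈ Finset.Icc 1 k, η j • ε j) s‖ := norm_le_pi_norm _ a
      _ ≤ eN := norm_le_pi_norm _ s
  -- ---------------- aggregation ----------------
  have hgen : ∀ (m : ℕ) (u : ℕ → ℝ) (s : S) (a : A),
      ∑ j ∈ Finset.range m, u j * TKL P r γ (lam j) (π (j + 1)) (π j) (q j) s a
        = (∑ j ∈ Finset.range m, u j) * r s a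
          + γ * ∑ s', P s a s' * (∑ j ∈ Finset.range m, u j * ((η j)⁻¹ * LF η q π j s')) := by
    intro m u s a
    have h1 : ∀ j ∈ Finset.range m, u j * TKL P r γ (lam j) (π (j + 1)) (π j) (q j) s a
        = u j * r s a + ∑ s', γ * (P s a s' * (u j * ((η j)⁻¹ * LF η q π j s'))) := by
      intro j _
      have e1 : u j * TKL P r γ (lam j) (π (j + 1)) (π j) (q j) s a
          = u j * r s a + u j * γ * ∑ s', P s a s' * ((η j)⁻¹ * LF η q π j s') := by
        rw [hTf j s a]; ring
      have e2 : u j * γ * ∑ s', P s a s' * ((η j)⁻¹ * LF η q π j s')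
          = ∑ s', γ * (P s a s' * (u j * ((η j)⁻¹ * LF η q π j s'))) := by
        rw [Finset.mul_sum]
        exact Finset.sum_congr rfl fun s' _ => by ring
      rw [e1, e2]
    rw [Finset.sum_congr rfl h1, Finset.sum_add_distrib, ← Finset.sum_mul, Finset.sum_comm]
    congr 1
    rw [Finset.mul_sum]
    refine Finset.sum_congr rfl fun s' _ => ?_
    rw [Finset.mul_sum, Finset.mul_sum]
    try exact Finset.sum_congr rfl fun j _ => by ring
  set Zk : ℝ := ∑ j ∈ Finset.range (k + 1), η j with hZk
  have hZkpos : 0 < Zk :=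
    Finset.sum_pos (fun j _ => hηpos j) (Finset.nonempty_range_add_one)
  set F : S → A → ℝ := fun s a =>
    (∑ j ∈ Finset.range k, η (j + 1) * q (j + 1) s a)
      + ∑ j ∈ Finset.range (k + 1), w j * TKL P r γ (lam j) (π (j + 1)) (π j) (q j) s a
    with hF
  set cf : ℕ → ℝ := fun j => if j = k then w k / η k else (η (j + 1) + w j) / η j with hcf
  set Φ : S → ℝ := fun s' => ∑ j ∈ Finset.range (k + 1), cf j * LF η q π j s' with hΦ
  have hΦsplit : ∀ s',
      (∑ j ∈ Finset.range k, η (j + 1) * ((η j)⁻¹ * LF η q π j s'))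
        + ∑ j ∈ Finset.range (k + 1), w j * ((η j)⁻¹ * LF η q π j s') = Φ s' := by
    intro s'
    rw [hΦ]
    dsimp only
    rw [Finset.sum_range_succ (fun j => w j * ((η j)⁻¹ * LF η q π j s')),
      Finset.sum_range_succ (fun j => cf j * LF η q π j s'), ← add_assoc,
      ← Finset.sum_add_distrib]
    congr 1
    · refine Finset.sum_congr rfl fun j hj => ?_
      rw [hcf]
      dsimp only
      rw [if_neg (Nat.ne_of_lt (Finset.mem_range.mp hj))]
      have := hηpos j
      field_simp
    · rw [hcf]
      dsimp only
      rw [if_pos rfl]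
      have := hηpos k
      field_simp
  have hAGG : ∀ s a, F s a = Zk * r s a + γ * (∑ s', P s a s' * Φ s')
      + ∑ j ∈ Finset.range k, η (j + 1) * ε (j + 1) s a := by
    intro s a
    rw [hF]
    dsimp only
    have hq' : ∀ j ∈ Finset.range k, η (j + 1) * q (j + 1) s a
        = η (j + 1) * TKL P r γ (lam j) (π (j + 1)) (π j) (q j) s a
          + η (j + 1) * ε (j + 1) s a := by
      intro j _
      rw [hq j s a]
      ring
    rw [Finset.sum_congr rfl hq', Finset.sum_add_distrib,
      hgen k (fun j => η (j + 1)) s a, hgen (k + 1) w s a, hwsum]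
    have hZk' : (∑ j ∈ Finset.range k, η (j + 1)) + η 0 = Zk := by
      rw [hZk, Finset.sum_range_succ']
    have hmerge : γ * ∑ s', P s a s' *
          (∑ j ∈ Finset.range k, η (j + 1) * ((η j)⁻¹ * LF η q π j s'))
        + γ * ∑ s', P s a s' *
          (∑ j ∈ Finset.range (k + 1), w j * ((η j)⁻¹ * LF η q π j s'))
        = γ * ∑ s', P s a s' * Φ s' := by
      rw [← mul_add, ← Finset.sum_add_distrib]
      congr 1
      refine Finset.sum_congr rfl fun s' _ => ?_
      rw [← mul_add, hΦsplit s']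
    have hZr : (∑ j ∈ Finset.range k, η (j + 1)) * r s a + η 0 * r s a = Zk * r s a := by
      rw [← add_mul, hZk']
    linarith [hmerge, hZr]
  -- ---------------- Φ remainder bound ----------------
  set lnN : ℝ := Real.log (Fintype.card A : ℝ) with hlnNdef
  set ρ : ℝ := (∑ j ∈ Finset.range k, |η j - η (j + 1)|) + η k - η 0 with hρ
  have hcoefsum : ∑ j ∈ Finset.range (k + 1), |cf j - 1| * η j = ρ := by
    rw [Finset.sum_range_succ]
    have hlast : |cf k - 1| * η k = η k - c * η k := by
      rw [hcf]
      dsimp only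
      rw [if_pos rfl, hwk]
      have hηk := hηpos k
      rw [mul_div_assoc, div_self (ne_of_gt hηk)]
      rw [abs_of_nonpos (by nlinarith : c * 1 - 1 ≤ 0)]
      nlinarith
    have hj : ∀ j ∈ Finset.range k, |cf j - 1| * η j
        = |η j - η (j + 1)| - c * max (η j - η (j + 1)) 0 := by
      intro j hj
      rw [hcf]
      dsimp only
      rw [if_neg (Nat.ne_of_lt (Finset.mem_range.mp hj)), hwrangek j hj]
      have hηj := hηpos j
      have h1 : (η (j + 1) + c * max (η j - η (j + 1)) 0) / η j - 1
          = (c * max (η j - η (j + 1)) 0 - (η j - η (j + 1))) / η j := by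
        field_simp
        ring
      rw [h1, abs_div, abs_of_pos hηj, div_mul_cancel₀ _ (ne_of_gt hηj)]
      rcases le_or_gt (η j - η (j + 1)) 0 with hd | hd
      · rw [max_eq_right hd, mul_zero, zero_sub, abs_neg, sub_zero]
      · rw [max_eq_left hd.le, abs_of_pos hd]
        rw [abs_of_nonpos (by nlinarith : c * (η j - η (j + 1)) - (η j - η (j + 1)) ≤ 0)]
        ring
    rw [Finset.sum_congr rfl hj, Finset.sum_sub_distrib, ← Finset.mul_sum, ← hDm, hlast, hρ]
    have : c * Dm + c * η k = η 0 := by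
      calc c * Dm + c * η k = c * (Dm + η k) := by ring
        _ = η 0 := hcDm
    linarith
  have hρ0 : 0 ≤ ρ := by
    have h1 : ∀ j ∈ Finset.range (k + 1), 0 ≤ |cf j - 1| * η j :=
      fun j _ => mul_nonneg (abs_nonneg _) (hηpos j).le
    have := Finset.sum_nonneg h1
    rw [hcoefsum] at this
    exact this
  have hΦb : ∀ s', |Φ s' - (MF η q k s' - lnN)| ≤ ρ * qmax := by
    intro s'
    have htel : ∑ j ∈ Finset.range (k + 1), LF η q π j s' = MF η q k s' - lnN :=
      aux_Mtel η q π hπ0 hπ k s'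
    have hdiff : Φ s' - (MF η q k s' - lnN)
        = ∑ j ∈ Finset.range (k + 1), (cf j - 1) * LF η q π j s' := by
      rw [← htel, hΦ]
      dsimp only
      rw [← Finset.sum_sub_distrib]
      exact Finset.sum_congr rfl fun j _ => by ring
    rw [hdiff]
    calc |∑ j ∈ Finset.range (k + 1), (cf j - 1) * LF η q π j s'|
        ≤ ∑ j ∈ Finset.range (k + 1), |(cf j - 1) * LF η q π j s'| :=
          Finset.abs_sum_le_sum_abs _ _
      _ ≤ ∑ j ∈ Finset.range (k + 1), |cf j - 1| * (η j * qmax) := by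
          refine Finset.sum_le_sum fun j _ => ?_
          rw [abs_mul]
          exact mul_le_mul_of_nonneg_left (hLb j s') (abs_nonneg _)
      _ = ρ * qmax := by
          rw [← hcoefsum, Finset.sum_mul]
          exact Finset.sum_congr rfl fun j _ => by ring
  -- ---------------- F bounds ----------------
  have hFsplit : ∀ s' b, F s' b = SbF η q k s' b +
      ((∑ j ∈ Finset.range (k + 1), w j * TKL P r γ (lam j) (π (j + 1)) (π j) (q j) s' b)
        - η 0 * q 0 s' b) := by
    intro s' b
    rw [hF]
    dsimp only
    have : SbF η q k s' b = (∑ j ∈ Finset.range k, η (j + 1) * q (j + 1) s' b) + η 0 * q 0 s' b := by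
      unfold SbF
      rw [Finset.sum_range_succ']
    rw [this]
    ring
  have hGb : ∀ s' b,
      |(∑ j ∈ Finset.range (k + 1), w j * TKL P r γ (lam j) (π (j + 1)) (π j) (q j) s' b)
        - η 0 * q 0 s' b| ≤ 2 * η 0 * qmax := by
    intro s' b
    have h1 : |∑ j ∈ Finset.range (k + 1), w j * TKL P r γ (lam j) (π (j + 1)) (π j) (q j) s' b|
        ≤ η 0 * qmax := by
      calc |∑ j ∈ Finset.range (k + 1), w j * TKL P r γ (lam j) (π (j + 1)) (π j) (q j) s' b|
          ≤ ∑ j ∈ Finset.range (k + 1), |w j * TKL P r γ (lam j) (π (j + 1)) (π j) (q j) s' b| :=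
            Finset.abs_sum_le_sum_abs _ _
        _ ≤ ∑ j ∈ Finset.range (k + 1), w j * qmax := by
            refine Finset.sum_le_sum fun j _ => ?_
            rw [abs_mul, abs_of_nonneg (hw0 j)]
            exact mul_le_mul_of_nonneg_left (hTb' j s' b) (hw0 j)
        _ = η 0 * qmax := by rw [← Finset.sum_mul, hwsum]
    have h2 : |η 0 * q 0 s' b| ≤ η 0 * qmax := by
      rw [abs_mul, abs_of_pos (hηpos 0)]
      exact mul_le_mul_of_nonneg_left (hqb' 0 s' b) (hηpos 0).le
    calc |(∑ j ∈ Finset.range (k + 1), w j * TKL P r γ (lam j) (π (j + 1)) (π j) (q j) s' b)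
        - η 0 * q 0 s' b|
        ≤ |∑ j ∈ Finset.range (k + 1), w j * TKL P r γ (lam j) (π (j + 1)) (π j) (q j) s' b|
          + |η 0 * q 0 s' b| := abs_sub _ _
      _ ≤ 2 * η 0 * qmax := by linarith
  have hF1 : ∀ s', ∑ b, πstar s' b * F s' b ≤ (MF η q k s' - lnN) + lnN + 2 * η 0 * qmax := by
    intro s'
    have hsplit : ∑ b, πstar s' b * F s' b
        = (∑ b, πstar s' b * SbF η q k s' b)
          + ∑ b, πstar s' b *
            ((∑ j ∈ Finset.range (k + 1), w j * TKL P r γ (lam j) (π (j + 1)) (π j) (q j) s' b)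
              - η 0 * q 0 s' b) := by
      rw [← Finset.sum_add_distrib]
      refine Finset.sum_congr rfl fun b _ => ?_
      rw [hFsplit s' b]
      ring
    rw [hsplit]
    have h1 : ∑ b, πstar s' b * SbF η q k s' b ≤ MF η q k s' :=
      aux_dot_le _ _ _ (fun b => hπstar.1 s' b) (hπstar.2 s') (fun b => aux_M1 η q k s' b)
    have h2 : ∑ b, πstar s' b *
        ((∑ j ∈ Finset.range (k + 1), w j * TKL P r γ (lam j) (π (j + 1)) (π j) (q j) s' b)
          - η 0 * q 0 s' b) ≤ 2 * η 0 * qmax :=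
      aux_dot_le _ _ _ (fun b => hπstar.1 s' b) (hπstar.2 s')
        (fun b => (abs_le.mp (hGb s' b)).2)
    linarith
  have hF2 : ∀ s', (MF η q k s' - lnN) - 2 * η 0 * qmax ≤ ∑ b, π (k + 1) s' b * F s' b := by
    intro s'
    have hsplit : ∑ b, π (k + 1) s' b * F s' b
        = (∑ b, π (k + 1) s' b * SbF η q k s' b)
          + ∑ b, π (k + 1) s' b *
            ((∑ j ∈ Finset.range (k + 1), w j * TKL P r γ (lam j) (π (j + 1)) (π j) (q j) s' b)
              - η 0 * q 0 s' b) := by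
      rw [← Finset.sum_add_distrib]
      refine Finset.sum_congr rfl fun b _ => ?_
      rw [hFsplit s' b]
      ring
    rw [hsplit]
    have h1 : MF η q k s' - lnN ≤ ∑ b, π (k + 1) s' b * SbF η q k s' b :=
      aux_M2 η q π k s' (fun b => hsm k s' b) (fun b => (hpol (k + 1)).1 s' b)
        ((hpol (k + 1)).2 s')
    have h2 : -(2 * η 0 * qmax) ≤ ∑ b, π (k + 1) s' b *
        ((∑ j ∈ Finset.range (k + 1), w j * TKL P r γ (lam j) (π (j + 1)) (π j) (q j) s' b)
          - η 0 * q 0 s' b) :=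
      aux_dot_ge _ _ _ (fun b => ((hpol (k + 1)).1 s' b).le) ((hpol (k + 1)).2 s')
        (fun b => (abs_le.mp (hGb s' b)).1)
    linarith
  -- ---------------- apply the two-chain core lemma ----------------
  have hqs : ∀ s a, qstar s a = r s a + γ * ∑ s', P s a s' * (∑ b, πstar s' b * qstar s' b) := by
    intro s a
    have h := congrFun (congrFun hqstar s) a
    simp only [bellman, Ppi, kerApp, dotSA] at h
    exact h
  have hqp : ∀ s a, qpol (k + 1) s a
      = r s a + γ * ∑ s', P s a s' * (∑ b, π (k + 1) s' b * qpol (k + 1) s' b) := by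
    intro s a
    have h := congrFun (congrFun (hqpol (k + 1)) s) a
    simp only [bellman, Ppi, kerApp, dotSA] at h
    exact h
  have hcore := aux_core P hP0 hP1 γ hγ0.le hγ1 πstar (π (k + 1))
    hπstar.1 hπstar.2 (fun s b => ((hpol (k + 1)).1 s b).le) ((hpol (k + 1)).2)
    r qstar (qpol (k + 1)) F
    (fun s a => ∑ j ∈ Finset.range k, η (j + 1) * ε (j + 1) s a)
    Φ (fun s' => MF η q k s' - lnN) Zk (2 * η 0 * qmax) (ρ * qmax) eN lnN
    hqs hqp hAGG
    (fun s' => by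
      have := (abs_le.mp (hΦb s')).2
      show Φ s' ≤ MF η q k s' - lnN + ρ * qmax
      linarith)
    (fun s' => by
      have := (abs_le.mp (hΦb s')).1
      show MF η q k s' - lnN - ρ * qmax ≤ Φ s'
      linarith)
    hF1 hF2 hEb
  -- ---------------- final arithmetic ----------------
  set B : ℝ := η (k + 1) + η 0 + ∑ j ∈ Finset.range (k + 1), |η (j + 1) - η j| with hB
  have hB0 : 0 ≤ B := by
    have h1 : 0 ≤ ∑ j ∈ Finset.range (k + 1), |η (j + 1) - η j| :=
      Finset.sum_nonneg fun j _ => abs_nonneg _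
    have := hηpos (k + 1); have := hηpos 0
    rw [hB]; linarith
  have hXB : η 0 + (∑ j ∈ Finset.range k, |η j - η (j + 1)|) + η k ≤ B := by
    have hsum : ∑ j ∈ Finset.range (k + 1), |η (j + 1) - η j|
        = (∑ j ∈ Finset.range k, |η (j + 1) - η j|) + |η (k + 1) - η k| :=
      Finset.sum_range_succ _ k
    have hcomm : ∑ j ∈ Finset.range k, |η j - η (j + 1)|
        = ∑ j ∈ Finset.range k, |η (j + 1) - η j| :=
      Finset.sum_congr rfl fun j _ => abs_sub_comm _ _
    have hk2 : η k ≤ η (k + 1) + |η (k + 1) - η k| := by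
      have := le_abs_self (η k - η (k + 1))
      rw [abs_sub_comm] at this
      linarith
    rw [hB, hsum, hcomm]
    linarith
  have hkey : 2 * eN + γ * (2 * (2 * η 0 * qmax) + 2 * (ρ * qmax) + lnN)
      ≤ 2 * (eN + B * qmax + γ * lnN) := by
    have hX : 2 * (2 * η 0 * qmax) + 2 * (ρ * qmax)
        = 2 * ((η 0 + (∑ j ∈ Finset.range k, |η j - η (j + 1)|) + η k) * qmax) := by
      rw [hρ]; ring
    set X : ℝ := η 0 + (∑ j ∈ Finset.range k, |η j - η (j + 1)|) + η k with hXdef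
    have hX0 : 0 ≤ X := by
      have h1 : 0 ≤ ∑ j ∈ Finset.range k, |η j - η (j + 1)| :=
        Finset.sum_nonneg fun j _ => abs_nonneg _
      have := hηpos 0; have := hηpos k
      rw [hXdef]; linarith
    have h1 : γ * (X * qmax) ≤ X * qmax :=
      mul_le_of_le_one_left (mul_nonneg hX0 hqmax) hγ1.le
    have h2 : X * qmax ≤ B * qmax := mul_le_mul_of_nonneg_right hXB hqmax
    have h3 : γ * lnN ≤ 2 * (γ * lnN) := by
      have : 0 ≤ γ * lnN := mul_nonneg hγ0.le hlnN
      linarith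
    have h4 : γ * (2 * (2 * η 0 * qmax) + 2 * (ρ * qmax) + lnN)
        = 2 * (γ * (X * qmax)) + γ * lnN := by
      rw [hX]; ring
    linarith
  -- ---------------- conclude ----------------
  have hZZk : Z k = Zk := by rw [hZ k, hZk]
  have hT0 : 0 ≤ eN + B * qmax + γ * lnN := by
    have := mul_nonneg hB0 hqmax
    have := mul_nonneg hγ0.le hlnN
    linarith
  have hRHS0 : 0 ≤ 2 / (1 - γ) * (1 / Z k) * (eN + B * qmax + γ * lnN) := by
    have h1 : 0 ≤ 2 / (1 - γ) := by positivity
    have h2 : 0 ≤ 1 / Z k := by rw [hZZk]; positivity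
    positivity
  rw [pi_norm_le_iff_of_nonneg hRHS0]
  intro s
  rw [pi_norm_le_iff_of_nonneg hRHS0]
  intro a
  have hle : qpol (k + 1) s a ≤ qstar s a :=
    hopt (π (k + 1)) ⟨fun s' b => ((hpol (k + 1)).1 s' b).le, (hpol (k + 1)).2⟩
      (qpol (k + 1)) (hqpol (k + 1)) s a
  have habs : ‖(qstar - qpol (k + 1)) s a‖ = qstar s a - qpol (k + 1) s a := by
    rw [Pi.sub_apply, Pi.sub_apply, Real.norm_eq_abs, abs_of_nonneg (by linarith)]
  rw [habs]
  have hform : 2 / (1 - γ) * (1 / Z k) * (eN + B * qmax + γ * lnN)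
      = 2 * (eN + B * qmax + γ * lnN) / ((1 - γ) * Zk) := by
    rw [hZZk]
    field_simp
  rw [hform, le_div_iff₀ (by positivity : (0:ℝ) < (1 - γ) * Zk)]
  have h1 := hcore s a
  have h2 : (qstar s a - qpol (k + 1) s a) * ((1 - γ) * Zk)
      = (1 - γ) * (Zk * qstar s a - Zk * qpol (k + 1) s a) := by ring
  linarith
end
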